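/- Let G be a strongly connected finite directed graph without loops with a distinguished sink vertex s. If T is a rotor configuration belonging to Rec(G) (i.e., the rotors form an oriented spanning tree rooted at the sink), then for every vertex x, the configuration e_x(T) obtained by starting a chip at x and running rotor-router walk until the chip reaches the sink also belongs to Rec(G). -/
import Mathlib


/-- A finite directed multigraph without loops, together with a distinguished
sink vertex and, for each vertex `x`, a cyclic ordering of the edges emanating
from `x`: the outgoing edges at `x` are indexed by `ZMod (deg x)` (in cyclic
order), and `head x e` is the target of the edge `e`. -/
structure RotorGraph (V : Type*) [Fintype V] [DecidableEq V] where
  sink : V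
  deg : V → ℕ
  deg_pos : ∀ x, 0 < deg x
  head : ∀ x : V, ZMod (deg x) → V
  no_loops : ∀ x e, head x e ≠ x

namespace RotorGraph

variable {V : Type*} [Fintype V] [DecidableEq V] (G : RotorGraph V)

/-- `x` is adjacent to `y` if some edge goes from `x` to `y`. -/
def Adj (x y : V) : Prop := ∃ e, G.head x e = y

/-- `G` is strongly connected: every vertex has a directed path to every vertex. -/
def StronglyConnected : Prop := ∀ x y : V, Relation.ReflTransGen G.Adj x y

/-- A rotor configuration: each vertex carries a rotor pointing along one of
its outgoing edges.  (The value at the sink is irrelevant: it is never read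
nor modified by the rotor-router walk.) -/
abbrev Conf := ∀ x : V, ZMod (G.deg x)

/-- One step of rotor-router walk for the state (rotor configuration, chip
location): if the chip is not at the sink, first increment the rotor at the
chip's location to the next edge in the cyclic ordering, then move the chip
along this new edge.  States whose chip is at the sink are absorbing. -/
def step (p : G.Conf × V) : G.Conf × V :=
  if p.2 = G.sink then p
  else (Function.update p.1 p.2 (p.1 p.2 + 1), G.head p.2 (p.1 p.2 + 1))

/-- The target of the rotor at `x`. -/
def next (T : G.Conf) (x : V) : V := G.head x (T x)

/-- The rotors of `T` contain an oriented cycle all of whose vertices lie in `A`. -/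
def HasCycleIn (T : G.Conf) (A : Set V) : Prop :=
  ∃ (m : ℕ) (x : V), 0 < m ∧ (∀ i < m, (G.next T)^[i] x ∈ A) ∧ (G.next T)^[m] x = x

/-- `T ∈ Rec(G)`: the rotors at the non-sink vertices form no oriented cycle,
i.e. they form an oriented spanning tree rooted at the sink. -/
def Rec (T : G.Conf) : Prop := ¬ G.HasCycleIn T {y | y ≠ G.sink}

/-- `e_x(T)`: start a chip at `x` and let it perform rotor-router walk until
it first reaches the sink; `chip x T` is the resulting rotor configuration. -/
noncomputable def chip (x : V) (T : G.Conf) : G.Conf :=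
  haveI := Classical.dec (∃ n, (G.step^[n] (T, x)).2 = G.sink)
  if h : ∃ n, (G.step^[n] (T, x)).2 = G.sink then (G.step^[Nat.find h] (T, x)).1 else T

end RotorGraph


namespace RotorGraph

/-- Invariant: every rotor cycle avoiding the sink passes through the chip. -/
def Inv {V : Type*} [Fintype V] [DecidableEq V] (G : RotorGraph V)
    (p : G.Conf × V) : Prop :=
  ∀ (m : ℕ) (z : V), 0 < m → (∀ i < m, (G.next p.1)^[i] z ≠ G.sink) →
    (G.next p.1)^[m] z = z → ∃ i < m, (G.next p.1)^[i] z = p.2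

lemma inv_step {V : Type*} [Fintype V] [DecidableEq V] (G : RotorGraph V)
    (p : G.Conf × V) (hp : G.Inv p) : G.Inv (G.step p) := by
  obtain ⟨S, c⟩ := p
  by_cases hc : c = G.sink
  · simpa [step, hc] using hp
  · simp only [step, hc, if_neg, if_false]
    set S' := Function.update S c (S c + 1) with hS'
    intro m z hm hns hcyc
    by_cases hc' : ∃ i < m, (G.next S')^[i] z = c
    · obtain ⟨i, him, hi⟩ := hc'
      rcases eq_or_lt_of_le (Nat.succ_le_of_lt him) with h1 | h1
      · refine ⟨0, hm, ?_⟩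
        have h2 : (G.next S')^[i+1] z = G.next S' c := by
          rw [Function.iterate_succ_apply', hi]
        have h1' : i + 1 = m := h1
        rw [h1', hcyc] at h2
        simpa [next, S', Function.update_self] using h2
      · refine ⟨i+1, h1, ?_⟩
        rw [Function.iterate_succ_apply', hi]
        simp [next, S', Function.update_self]
    · push_neg at hc'
      have hiter : ∀ i ≤ m, (G.next S')^[i] z = (G.next S)^[i] z := by
        intro i hi
        induction i with
        | zero => rfl
        | succ k ih =>
          have hk : k < m := lt_of_lt_of_le (Nat.lt_succ_self k) hi
          rw [Function.iterate_succ_apply', Function.iterate_succ_apply',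
            ← ih hk.le]
          have hne := hc' k hk
          simp [next, S', Function.update_of_ne hne]
      obtain ⟨i, him, hi⟩ := hp m z hm
        (fun i h => by rw [← hiter i h.le]; exact hns i h)
        (by rw [← hiter m le_rfl]; exact hcyc)
      exact absurd ((hiter i him.le).trans hi) (hc' i him)

end RotorGraph

/-- If `T ∈ Rec(G)` then `e_x(T) ∈ Rec(G)`. -/
theorem stmt0 {V : Type*} [Fintype V] [DecidableEq V] (G : RotorGraph V)
    (hG : G.StronglyConnected) (T : G.Conf) (hT : G.Rec T) (x : V) :
    G.Rec (G.chip x T) := by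
  have hInv : ∀ n, G.Inv (G.step^[n] (T, x)) := by
    intro n
    induction n with
    | zero =>
      intro m z hm hns hcyc
      exact absurd ⟨m, z, hm, fun i h => hns i h, hcyc⟩ hT
    | succ n ih =>
      rw [Function.iterate_succ_apply']
      exact G.inv_step _ ih
  unfold RotorGraph.chip
  split
  next h =>
    intro hcy
    obtain ⟨m, z, hm, hA, hc⟩ := hcy
    obtain ⟨i, him, hi⟩ := hInv (Nat.find h) m z hm (fun i h' => hA i h') hc
    exact hA i him (hi.trans (Nat.find_spec h))
  next => exact hT
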